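/- Let b > 0, let W : ℝ → ℝ be bounded measurable, let q ∈ ℂ, m ∈ ℤ, κ ≥ 0, and let ũ : [−b,b] → ℂ be twice continuously differentiable with ũ(−b) = ũ(b) = 0. Define u : [−b,b] × [−b,b] → ℂ by u(x,y) = ũ(x)·sin(2πmy/b). If ∫_{−b}^b |−ũ''(x) + i q W(x) ũ(x) + (4π²m²/b² − q²) ũ(x)|² dx ≤ κ · ∫_{−b}^b |ũ(x)|² dx, then u vanishes on the boundary of the square [−b,b]², and ∫∫_{[−b,b]²} |−Δu(x,y) + i q W(x) u(x,y) − q² u(x,y)|² dx dy ≤ κ · ∫∫_{[−b,b]²} |u(x,y)|² dx dy, where Δu = ∂²u/∂x² + ∂²u/∂y². -/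

import Mathlib

open MeasureTheory Set

/-- The `y`-factor `sin(2πmy/b)`, viewed as a complex number. -/
noncomputable def sinb (b : ℝ) (m : ℤ) (y : ℝ) : ℂ :=
  ((Real.sin (2 * Real.pi * (m : ℝ) * y / b) : ℝ) : ℂ)

lemma sinb_b (b : ℝ) (hb : b ≠ 0) (m : ℤ) : sinb b m b = 0 := by
  have h : 2 * Real.pi * (m : ℝ) * b / b = ((2 * m : ℤ) : ℝ) * Real.pi := by
    field_simp; push_cast; ring
  simp only [sinb]
  rw [h, Real.sin_int_mul_pi, Complex.ofReal_zero]

lemma sinb_neg_b (b : ℝ) (hb : b ≠ 0) (m : ℤ) : sinb b m (-b) = 0 := by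
  have h : 2 * Real.pi * (m : ℝ) * (-b) / b = ((-(2 * m) : ℤ) : ℝ) * Real.pi := by
    rw [div_eq_iff hb]; push_cast; ring
  simp only [sinb]
  rw [h, Real.sin_int_mul_pi, Complex.ofReal_zero]

/-- From one-dimensional quasimodes to two-dimensional quasimodes: if `ũ` satisfies the
one-dimensional quasimode estimate with Dirichlet conditions at `±b`, then
`u(x,y) = ũ(x) sin(2πmy/b)` vanishes on the boundary of the square `[-b,b]²`, its
Laplacian is `ũ''(x) sin(2πmy/b) - (4π²m²/b²) ũ(x) sin(2πmy/b)` (identified via iterated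
partial derivatives), and `u` satisfies the corresponding two-dimensional estimate. -/
theorem stmt_16 (b : ℝ) (hb : 0 < b) (W : ℝ → ℝ) (hWmeas : Measurable W)
    (hWbdd : ∃ M : ℝ, ∀ x : ℝ, |W x| ≤ M)
    (q : ℂ) (m : ℤ) (κ : ℝ) (hκ : 0 ≤ κ)
    (ut ut' ut'' : ℝ → ℂ)
    (h1 : ∀ x ∈ Icc (-b) b, HasDerivWithinAt ut (ut' x) (Icc (-b) b) x)
    (h2 : ∀ x ∈ Icc (-b) b, HasDerivWithinAt ut' (ut'' x) (Icc (-b) b) x)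
    (hcont : ContinuousOn ut'' (Icc (-b) b))
    (hbc1 : ut (-b) = 0) (hbc2 : ut b = 0)
    (hineq : ∫ x in Icc (-b) b,
        ‖-ut'' x + Complex.I * q * ((W x : ℝ) : ℂ) * ut x
          + (((4 * Real.pi ^ 2 * (m : ℝ) ^ 2 / b ^ 2 : ℝ) : ℂ) - q ^ 2) * ut x‖ ^ 2
      ≤ κ * ∫ x in Icc (-b) b, ‖ut x‖ ^ 2) :
    -- `u` vanishes on the boundary of the square
    (∀ p : ℝ × ℝ, p ∈ Icc (-b) b ×ˢ Icc (-b) b → (|p.1| = b ∨ |p.2| = b) →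
      ut p.1 * sinb b m p.2 = 0) ∧
    -- identification of the second partial derivatives of `u`
    (∀ x ∈ Icc (-b) b, ∀ y : ℝ,
      HasDerivWithinAt (fun s => ut s * sinb b m y) (ut' x * sinb b m y) (Icc (-b) b) x ∧
      HasDerivWithinAt (fun s => ut' s * sinb b m y) (ut'' x * sinb b m y) (Icc (-b) b) x ∧
      HasDerivAt (fun t => ut x * sinb b m t)
        (ut x * ((2 * Real.pi * (m : ℝ) / b * Real.cos (2 * Real.pi * (m : ℝ) * y / b) : ℝ) : ℂ)) y ∧
      HasDerivAt
        (fun t => ut x * ((2 * Real.pi * (m : ℝ) / b * Real.cos (2 * Real.pi * (m : ℝ) * t / b) : ℝ) : ℂ))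
        (-(((4 * Real.pi ^ 2 * (m : ℝ) ^ 2 / b ^ 2 : ℝ) : ℂ)) * (ut x * sinb b m y)) y) ∧
    -- the two-dimensional quasimode estimate
    ∫ p in Icc (-b) b ×ˢ Icc (-b) b,
        ‖-(ut'' p.1 * sinb b m p.2
              + (-(((4 * Real.pi ^ 2 * (m : ℝ) ^ 2 / b ^ 2 : ℝ) : ℂ)) * (ut p.1 * sinb b m p.2)))
          + Complex.I * q * ((W p.1 : ℝ) : ℂ) * (ut p.1 * sinb b m p.2)
          - q ^ 2 * (ut p.1 * sinb b m p.2)‖ ^ 2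
      ≤ κ * ∫ p in Icc (-b) b ×ˢ Icc (-b) b, ‖ut p.1 * sinb b m p.2‖ ^ 2 := by
  have hb0 : b ≠ 0 := ne_of_gt hb
  refine ⟨?_, ?_, ?_⟩
  · rintro ⟨x, y⟩ ⟨hx, hy⟩ (h | h)
    · rcases abs_eq (le_of_lt hb) |>.mp h with h' | h'
      · have hx' : x = b := h'
        rw [show ut x = 0 by rw [hx']; exact hbc2, zero_mul]
      · have hx' : x = -b := h'
        rw [show ut x = 0 by rw [hx']; exact hbc1, zero_mul]
    · rcases abs_eq (le_of_lt hb) |>.mp h with h' | h'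
      · have hy' : y = b := h'
        rw [show sinb b m y = 0 by rw [hy']; exact sinb_b b hb0 m, mul_zero]
      · have hy' : y = -b := h'
        rw [show sinb b m y = 0 by rw [hy']; exact sinb_neg_b b hb0 m, mul_zero]
  · intro x hx y
    have harg : ∀ t : ℝ, HasDerivAt (fun t : ℝ => 2 * Real.pi * (m : ℝ) * t / b)
        (2 * Real.pi * (m : ℝ) / b) t := by
      intro t
      simpa using ((hasDerivAt_id t).const_mul (2 * Real.pi * (m : ℝ))).div_const b
    have hsin : HasDerivAt (fun t => sinb b m t)
        (((2 * Real.pi * (m : ℝ) / b * Real.cos (2 * Real.pi * (m : ℝ) * y / b) : ℝ) : ℂ)) y := by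
      have := ((harg y).sin).ofReal_comp
      simpa [sinb, mul_comm] using this
    have hcos : HasDerivAt
        (fun t => ((2 * Real.pi * (m : ℝ) / b * Real.cos (2 * Real.pi * (m : ℝ) * t / b) : ℝ) : ℂ))
        (-(((4 * Real.pi ^ 2 * (m : ℝ) ^ 2 / b ^ 2 : ℝ) : ℂ)) * sinb b m y) y := by
      have h := (((harg y).cos).const_mul (2 * Real.pi * (m : ℝ) / b)).ofReal_comp
      convert h using 1
      simp only [sinb]
      push_cast
      field_simp
      ring
    refine ⟨(h1 x hx).mul_const _, (h2 x hx).mul_const _, hsin.const_mul _, ?_⟩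
    have := hcos.const_mul (ut x)
    convert this using 1
    · rfl
    · ring
  · have key : ∀ p : ℝ × ℝ,
        ‖-(ut'' p.1 * sinb b m p.2
              + (-(((4 * Real.pi ^ 2 * (m : ℝ) ^ 2 / b ^ 2 : ℝ) : ℂ)) * (ut p.1 * sinb b m p.2)))
          + Complex.I * q * ((W p.1 : ℝ) : ℂ) * (ut p.1 * sinb b m p.2)
          - q ^ 2 * (ut p.1 * sinb b m p.2)‖ ^ 2
        = ‖-ut'' p.1 + Complex.I * q * ((W p.1 : ℝ) : ℂ) * ut p.1
          + (((4 * Real.pi ^ 2 * (m : ℝ) ^ 2 / b ^ 2 : ℝ) : ℂ) - q ^ 2) * ut p.1‖ ^ 2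
          * ‖sinb b m p.2‖ ^ 2 := by
      intro p
      rw [← mul_pow, ← norm_mul]
      congr 2
      ring
    have key2 : ∀ p : ℝ × ℝ, ‖ut p.1 * sinb b m p.2‖ ^ 2 = ‖ut p.1‖ ^ 2 * ‖sinb b m p.2‖ ^ 2 := by
      intro p; rw [← mul_pow, ← norm_mul]
    simp only [key, key2]
    rw [MeasureTheory.Measure.volume_eq_prod,
      setIntegral_prod_mul (fun x => ‖-ut'' x + Complex.I * q * ((W x : ℝ) : ℂ) * ut x
          + (((4 * Real.pi ^ 2 * (m : ℝ) ^ 2 / b ^ 2 : ℝ) : ℂ) - q ^ 2) * ut x‖ ^ 2)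
        (fun y => ‖sinb b m y‖ ^ 2),
      setIntegral_prod_mul (fun x => ‖ut x‖ ^ 2) (fun y => ‖sinb b m y‖ ^ 2)]
    have hS : 0 ≤ ∫ y in Icc (-b) b, ‖sinb b m y‖ ^ 2 :=
      integral_nonneg fun y => by positivity
    calc (∫ x in Icc (-b) b, ‖-ut'' x + Complex.I * q * ((W x : ℝ) : ℂ) * ut x
          + (((4 * Real.pi ^ 2 * (m : ℝ) ^ 2 / b ^ 2 : ℝ) : ℂ) - q ^ 2) * ut x‖ ^ 2)
            * ∫ y in Icc (-b) b, ‖sinb b m y‖ ^ 2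
        ≤ (κ * ∫ x in Icc (-b) b, ‖ut x‖ ^ 2) * ∫ y in Icc (-b) b, ‖sinb b m y‖ ^ 2 :=
          mul_le_mul_of_nonneg_right hineq hS
      _ = κ * ((∫ x in Icc (-b) b, ‖ut x‖ ^ 2) * ∫ y in Icc (-b) b, ‖sinb b m y‖ ^ 2) := by
          ring
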